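/- arXiv:math/0407282 — 2 statements merged into one kernel-verified Lean document; each statement's English description precedes it below -/
import Mathlib

section
/- Let β be the Tribonacci number and α a complex root of X³−X²−X−1. Define R(1), R(2), R(3) as the subsets of the Tribonacci Rauzy fractal corresponding to admissible sequences (w_i)_{i≥0} with w₀ = 0, w₀w₁ = 10, and w₀w₁ = 11 respectively. Then R(1) = α(R(1) ∪ R(2) ∪ R(3)), R(2) = αR(1) + 1, and R(3) = αR(2) + 1. -/
/-- A `{0,1}`-sequence is admissible for the Tribonacci shift if it has no three
consecutive `1`'s. -/
def TribAdmissible (w : ℕ → ℕ) : Prop :=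
  (∀ i, w i ≤ 1) ∧ ∀ i, ¬(w i = 1 ∧ w (i + 1) = 1 ∧ w (i + 2) = 1)

/-- The piece of the Tribonacci Rauzy fractal consisting of values of admissible sequences
satisfying the predicate `P`. -/
def rauzyPiece (α : ℂ) (P : (ℕ → ℕ) → Prop) : Set ℂ :=
  {z | ∃ w : ℕ → ℕ, TribAdmissible w ∧ P w ∧ HasSum (fun i => (w i : ℂ) * α ^ i) z}

/-- Prepend a digit to a sequence. -/
def consN (a : ℕ) (w : ℕ → ℕ) : ℕ → ℕ := fun n => match n with
  | 0 => a
  | n + 1 => w n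

lemma consN_shift (w : ℕ → ℕ) : consN (w 0) (fun i => w (i + 1)) = w := by
  funext n; cases n <;> rfl

lemma trib_summable {α : ℂ} (hα : ‖α‖ < 1) {w : ℕ → ℕ} (hw : ∀ i, w i ≤ 1) :
    Summable (fun i => (w i : ℂ) * α ^ i) := by
  apply Summable.of_norm
  refine Summable.of_nonneg_of_le (fun i => norm_nonneg _) (fun i => ?_)
    (summable_geometric_of_lt_one (norm_nonneg α) hα)
  rw [norm_mul, norm_pow]
  have h1 : ‖(w i : ℂ)‖ ≤ 1 := by
    rw [Complex.norm_natCast]; exact_mod_cast hw i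
  calc ‖(w i : ℂ)‖ * ‖α‖ ^ i ≤ 1 * ‖α‖ ^ i := by gcongr
    _ = ‖α‖ ^ i := by simp

lemma cons_hasSum {α : ℂ} (a : ℕ) {w : ℕ → ℕ} {z : ℂ}
    (h : HasSum (fun i => (w i : ℂ) * α ^ i) z) :
    HasSum (fun i => ((consN a w i : ℕ) : ℂ) * α ^ i) ((a : ℂ) + α * z) := by
  have h1 : HasSum (fun i => ((consN a w (i + 1) : ℕ) : ℂ) * α ^ (i + 1)) (α * z) := by
    have := h.mul_left α
    convert this using 2 with i
    show ((w i : ℂ)) * α ^ (i + 1) = α * ((w i : ℂ) * α ^ i)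
    ring
    all_goals rfl
  have := (hasSum_nat_add_iff (f := fun i => ((consN a w i : ℕ) : ℂ) * α ^ i) 1).mp h1
  simpa [consN, add_comm] using this

lemma shift_admissible {w : ℕ → ℕ} (h : TribAdmissible w) :
    TribAdmissible (fun i => w (i + 1)) :=
  ⟨fun i => h.1 (i + 1), fun i => h.2 (i + 1)⟩

lemma cons_admissible {a : ℕ} (ha : a ≤ 1) {w : ℕ → ℕ} (h : TribAdmissible w)
    (h11 : ¬(a = 1 ∧ w 0 = 1 ∧ w 1 = 1)) : TribAdmissible (consN a w) := by
  constructor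
  · intro i; cases i with
    | zero => exact ha
    | succ n => exact h.1 n
  · intro i; cases i with
    | zero => exact h11
    | succ n => exact h.2 n

/-- Decomposition of the sum of an admissible sequence via its shift. -/
lemma decomp {α : ℂ} (hα : ‖α‖ < 1) {w : ℕ → ℕ} (hadm : TribAdmissible w) {z : ℂ}
    (hs : HasSum (fun i => (w i : ℂ) * α ^ i) z) :
    HasSum (fun i => ((w (i + 1) : ℕ) : ℂ) * α ^ i) (∑' i, ((w (i + 1) : ℕ) : ℂ) * α ^ i) ∧
      z = (w 0 : ℂ) + α * ∑' i, ((w (i + 1) : ℕ) : ℂ) * α ^ i := by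
  have hsum : Summable (fun i => ((w (i + 1) : ℕ) : ℂ) * α ^ i) :=
    trib_summable hα (fun i => hadm.1 (i + 1))
  have hs' := hsum.hasSum
  refine ⟨hs', ?_⟩
  have := cons_hasSum (α := α) (w 0) hs'
  rw [consN_shift] at this
  exact hs.unique this

/-- The self-similar (IFS) decomposition of the Tribonacci Rauzy fractal:
`R(1) = α(R(1) ∪ R(2) ∪ R(3))`, `R(2) = αR(1) + 1`, `R(3) = αR(2) + 1`. -/
theorem rauzy_fractal_ifs (α : ℂ) (hroot : α ^ 3 = α ^ 2 + α + 1)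
    (hα : ‖α‖ < 1) :
    rauzyPiece α (fun w => w 0 = 0) =
        (fun z => α * z) '' (rauzyPiece α (fun w => w 0 = 0) ∪
          rauzyPiece α (fun w => w 0 = 1 ∧ w 1 = 0) ∪
          rauzyPiece α (fun w => w 0 = 1 ∧ w 1 = 1)) ∧
      rauzyPiece α (fun w => w 0 = 1 ∧ w 1 = 0) =
        (fun z => α * z + 1) '' rauzyPiece α (fun w => w 0 = 0) ∧
      rauzyPiece α (fun w => w 0 = 1 ∧ w 1 = 1) =
        (fun z => α * z + 1) '' rauzyPiece α (fun w => w 0 = 1 ∧ w 1 = 0) := by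
  refine ⟨?_, ?_, ?_⟩
  · ext z
    constructor
    · rintro ⟨w, hadm, h0, hs⟩
      obtain ⟨hs', hz⟩ := decomp hα hadm hs
      set s := ∑' i, ((w (i + 1) : ℕ) : ℂ) * α ^ i with hsdef
      refine ⟨s, ?_, by rw [hz, h0]; simp⟩
      have hadm' := shift_admissible hadm
      have h1 : w 1 ≤ 1 := hadm.1 1
      interval_cases hw1 : w 1
      · exact Or.inl (Or.inl ⟨_, hadm', hw1, hs'⟩)
      · have h2 : w 2 ≤ 1 := hadm.1 2
        interval_cases hw2 : w 2
        · exact Or.inl (Or.inr ⟨_, hadm', ⟨hw1, hw2⟩, hs'⟩)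
        · exact Or.inr ⟨_, hadm', ⟨hw1, hw2⟩, hs'⟩
    · rintro ⟨y, hy, rfl⟩
      have : ∃ w : ℕ → ℕ, TribAdmissible w ∧ HasSum (fun i => (w i : ℂ) * α ^ i) y := by
        rcases hy with (⟨w, hadm, _, hs⟩ | ⟨w, hadm, _, hs⟩) | ⟨w, hadm, _, hs⟩ <;>
          exact ⟨w, hadm, hs⟩
      obtain ⟨w, hadm, hs⟩ := this
      refine ⟨consN 0 w, cons_admissible (by norm_num) hadm (by simp), rfl, ?_⟩
      simpa using cons_hasSum (α := α) 0 hs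
  · ext z
    constructor
    · rintro ⟨w, hadm, ⟨h0, h1⟩, hs⟩
      obtain ⟨hs', hz⟩ := decomp hα hadm hs
      refine ⟨_, ⟨_, shift_admissible hadm, h1, hs'⟩, ?_⟩
      rw [hz, h0]; push_cast; ring
    · rintro ⟨y, ⟨w, hadm, h0, hs⟩, rfl⟩
      refine ⟨consN 1 w, cons_admissible le_rfl hadm (by simp [h0]), ⟨rfl, h0⟩, ?_⟩
      have := cons_hasSum (α := α) 1 hs
      convert this using 1
      push_cast; ring
  · ext z
    constructor
    · rintro ⟨w, hadm, ⟨h0, h1⟩, hs⟩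
      obtain ⟨hs', hz⟩ := decomp hα hadm hs
      have h2 : w 2 = 0 := by
        have h := hadm.2 0
        have hle := hadm.1 2
        simp only [Nat.zero_add] at h
        omega
      refine ⟨_, ⟨_, shift_admissible hadm, ⟨h1, h2⟩, hs'⟩, ?_⟩
      rw [hz, h0]; push_cast; ring
    · rintro ⟨y, ⟨w, hadm, ⟨h0, h1⟩, hs⟩, rfl⟩
      refine ⟨consN 1 w, cons_admissible le_rfl hadm (by simp [h1]), ⟨rfl, h0⟩, ?_⟩
      have := cons_hasSum (α := α) 1 hs
      convert this using 1
      push_cast; ring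
end

section
/- Let β > 1 and define the linear recurrent sequence U₀ = 1, U_k = t₁U_{k-1} + t₂U_{k-2} + … + t_kU₀ + 1 where (t_i) = d*_β(1). If β is a Pisot number, then there is a constant B > 0 with U_N ≥ B β^N for all N. -/
/-- Let `β` be a Pisot number and `(t_i) = d*_β(1)` the quasi-greedy expansion of `1`, so that
`1 = Σ_{i≥1} t_i β^{-i}` with digits `t_i ≤ β`. Let `(U_N)` be the associated canonical linear
numeration system: `U₀ = 1`, `U_k = t₁U_{k-1} + … + t_kU₀ + 1`. Then there is a constant
`B > 0` with `U_N ≥ B β^N` for all `N`. -/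
theorem canonical_numeration_lower_bound (β : ℝ) (hβ1 : 1 < β) (hint : IsIntegral ℤ β)
    (hconj : ∀ z : ℂ, Polynomial.aeval z (minpoly ℚ β) = 0 → z ≠ (β : ℂ) →
      ‖z‖ < 1)
    (t : ℕ → ℕ) (ht : ∀ i, (t i : ℝ) ≤ β)
    (hsum : HasSum (fun i => (t i : ℝ) * β ^ (-(i : ℤ) - 1)) 1)
    (U : ℕ → ℝ) (hU0 : U 0 = 1)
    (hU : ∀ k, U (k + 1) = (∑ i ∈ Finset.range (k + 1), (t i : ℝ) * U (k - i)) + 1) :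
    ∃ B > 0, ∀ N, B * β ^ N ≤ U N := by
  have hβ0 : (0:ℝ) < β := lt_trans one_pos hβ1
  have hβne : β ≠ 0 := ne_of_gt hβ0
  set B : ℝ := (β - 1) / β with hBdef
  have hBpos : 0 < B := div_pos (by linarith) hβ0
  have hB1 : B ≤ 1 := by rw [hBdef, div_le_one hβ0]; linarith
  have hBM : B * (β / (β - 1)) = 1 := by
    rw [hBdef, div_mul_div_comm]
    rw [div_eq_one_iff_eq (ne_of_gt (by nlinarith))]
    ring
  refine ⟨B, hBpos, ?_⟩
  -- geometric tail bound
  have hinv0 : (0:ℝ) ≤ β⁻¹ := le_of_lt (inv_pos.mpr hβ0)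
  have hinv1 : β⁻¹ < 1 := inv_lt_one_of_one_lt₀ hβ1
  have hgeom : HasSum (fun n : ℕ => β * β ^ (-(n:ℤ) - 1)) (β / (β - 1)) := by
    have h := (hasSum_geometric_of_lt_one hinv0 hinv1).mul_left (β * β⁻¹)
    have heq : ∀ n : ℕ, β * β⁻¹ * (β⁻¹) ^ n = β * β ^ (-(n:ℤ) - 1) := by
      intro n
      rw [show (-(n:ℤ) - 1) = -((n:ℤ)+1) by ring, zpow_neg, ← inv_zpow]
      push_cast
      rw [zpow_add₀ (inv_ne_zero hβne), zpow_natCast, zpow_one]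
      ring
    have hval : β * β⁻¹ * (1 - β⁻¹)⁻¹ = β / (β - 1) := by
      field_simp
    rw [← hval]
    exact (funext heq ▸ h)
  -- key inequality
  have key : ∀ k : ℕ, β ^ (k + 1) - β / (β - 1) ≤
      ∑ i ∈ Finset.range (k + 1), (t i : ℝ) * β ^ (k - i) := by
    intro k
    have h2 : HasSum (fun i => (t i : ℝ) * β ^ ((k:ℤ) - i)) (β ^ (k + 1)) := by
      have := hsum.mul_right (β ^ ((k:ℤ) + 1))
      rw [one_mul] at this
      have heq : ∀ i : ℕ, (t i : ℝ) * β ^ (-(i:ℤ) - 1) * β ^ ((k:ℤ) + 1)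
          = (t i : ℝ) * β ^ ((k:ℤ) - i) := by
        intro i
        rw [mul_assoc, ← zpow_add₀ hβne]
        ring_nf
      have h3 : HasSum (fun i => (t i : ℝ) * β ^ ((k:ℤ) - i)) (β ^ ((k:ℤ) + 1)) := by
        simpa [heq] using this
      rw [show ((k:ℤ) + 1) = ((k + 1 : ℕ) : ℤ) by push_cast; ring, zpow_natCast] at h3
      exact h3
    -- split: sum over range (k+1) + tail = total
    have hsplit := Summable.sum_add_tsum_nat_add (k + 1) h2.summable
    rw [h2.tsum_eq] at hsplit
    -- tail bound
    have htail : (∑' i : ℕ, (t (i + (k+1)) : ℝ) * β ^ ((k:ℤ) - (i + (k+1) : ℕ)))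
        ≤ β / (β - 1) := by
      have hle : ∀ i : ℕ, (t (i + (k+1)) : ℝ) * β ^ ((k:ℤ) - (i + (k+1) : ℕ))
          ≤ β * β ^ (-(i:ℤ) - 1) := by
        intro i
        have : ((k:ℤ) - (i + (k+1) : ℕ)) = (-(i:ℤ) - 1) := by push_cast; ring
        rw [this]
        exact mul_le_mul_of_nonneg_right (ht _) (le_of_lt (zpow_pos hβ0 _))
      calc _ ≤ ∑' i : ℕ, β * β ^ (-(i:ℤ) - 1) :=
              Summable.tsum_le_tsum hle ((h2.summable.comp_injective
                (add_left_injective (k+1)))) hgeom.summable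
        _ = β / (β - 1) := hgeom.tsum_eq
    -- finite sum in the statement matches (ℕ subtraction)
    have hfin : ∑ i ∈ Finset.range (k + 1), (t i : ℝ) * β ^ ((k:ℤ) - i)
        = ∑ i ∈ Finset.range (k + 1), (t i : ℝ) * β ^ (k - i) := by
      refine Finset.sum_congr rfl fun i hi => ?_
      have hik : i ≤ k := Nat.lt_succ_iff.mp (Finset.mem_range.mp hi)
      rw [show ((k:ℤ) - i) = ((k - i : ℕ) : ℤ) by
        push_cast [Nat.cast_sub hik]; ring, zpow_natCast]
    linarith [hsplit, htail, hfin.symm ▸ hsplit]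
  intro N
  induction N using Nat.strong_induction_on with
  | _ N ih =>
    match N with
    | 0 => simpa [hU0] using hB1
    | (k+1) =>
      have hsum_ge : ∑ i ∈ Finset.range (k + 1), (t i : ℝ) * U (k - i)
          ≥ B * ∑ i ∈ Finset.range (k + 1), (t i : ℝ) * β ^ (k - i) := by
        rw [Finset.mul_sum]
        refine Finset.sum_le_sum fun i hi => ?_
        have hik : k - i < k + 1 := Nat.lt_succ_of_le (Nat.sub_le k i)
        have := ih (k - i) hik
        calc B * ((t i : ℝ) * β ^ (k - i)) = (t i : ℝ) * (B * β ^ (k - i)) := by ring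
          _ ≤ (t i : ℝ) * U (k - i) :=
              mul_le_mul_of_nonneg_left this (Nat.cast_nonneg _)
      have hk := key k
      have : B * (β ^ (k+1) - β / (β - 1)) + 1 ≤ U (k + 1) := by
        rw [hU k]
        nlinarith [hsum_ge, hk, hBpos]
      calc B * β ^ (k + 1) = B * (β ^ (k+1) - β / (β - 1)) + B * (β / (β - 1)) := by ring
        _ = B * (β ^ (k+1) - β / (β - 1)) + 1 := by rw [hBM]
        _ ≤ U (k + 1) := this
end
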